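/- arXiv:2007.09781 — 8 statements merged into one kernel-verified Lean document; each statement's English description precedes it below -/
import Mathlib

section
/- If a preference relation ≿ on a convex subset X of a real topological vector space admits a finite multi-utility representation U where each u ∈ U is continuous and strictly quasiconcave, then ≿ satisfies midpoint continuity: for every x, y ∈ X with y ≻ x, there exist α ∈ [0,1) and open sets V, W ⊆ X such that (αx + (1−α)y, x) ∈ V × W and z' ≻ x' for all (z', x') ∈ V × W. -/
/-- A preference on a convex subset X of a real topological vector space
admitting a finite multi-utility representation by continuous strictly quasiconcave
utilities satisfies midpoint continuity. -/
theorem stmt_0 {E : Type*} [AddCommGroup E] [Module ℝ E] [TopologicalSpace E]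
    [IsTopologicalAddGroup E] [ContinuousSMul ℝ E]
    (X : Set E) (hX : Convex ℝ X)
    (R : E → E → Prop)
    (hrefl : ∀ x ∈ X, R x x)
    (htrans : ∀ x ∈ X, ∀ y ∈ X, ∀ z ∈ X, R x y → R y z → R x z)
    (U : Finset (E → ℝ))
    (hrep : ∀ x ∈ X, ∀ y ∈ X, (R x y ↔ ∀ u ∈ U, u y ≤ u x))
    (hcont : ∀ u ∈ U, ContinuousOn u X)
    (hsqc : ∀ u ∈ U, ∀ x ∈ X, ∀ y ∈ X, x ≠ y → ∀ α : ℝ, 0 < α → α < 1 →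
      min (u x) (u y) < u (α • x + (1 - α) • y)) :
    ∀ x ∈ X, ∀ y ∈ X, (R y x ∧ ¬ R x y) →
      ∃ α : ℝ, 0 ≤ α ∧ α < 1 ∧ ∃ V W : Set E, IsOpen V ∧ IsOpen W ∧
        (α • x + (1 - α) • y) ∈ V ∩ X ∧ x ∈ W ∩ X ∧
        ∀ z' ∈ V ∩ X, ∀ x' ∈ W ∩ X, (R z' x' ∧ ¬ R x' z') := by
  intro x hx y hy ⟨hRyx, hnRxy⟩
  have hxy : x ≠ y := by rintro rfl; exact hnRxy hRyx
  obtain ⟨u0, hu0U, _⟩ : ∃ u ∈ U, ¬ u y ≤ u x := by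
    by_contra h; push_neg at h
    exact hnRxy ((hrep x hx y hy).mpr fun u hu => h u hu)
  set z : E := (1/2 : ℝ) • x + (1 - (1/2 : ℝ)) • y with hzdef
  have hz : z ∈ X := hX hx hy (by norm_num) (by norm_num) (by norm_num)
  have hkey : ∀ u ∈ U, u x < u z := by
    intro u hu
    have h1 := hsqc u hu x hx y hy hxy (1/2) (by norm_num) (by norm_num)
    have h2 : u x ≤ u y := (hrep y hy x hx).mp hRyx u hu
    calc u x = min (u x) (u y) := (min_eq_left h2).symm
      _ < u z := h1
  have hA : (⋂ u ∈ U, u ⁻¹' Set.Ioi ((u x + u z) / 2)) ∈ nhdsWithin z X := by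
    rw [Filter.biInter_finset_mem]
    intro u hu
    exact (hcont u hu z hz) (Ioi_mem_nhds (by linarith [hkey u hu]))
  have hB : (⋂ u ∈ U, u ⁻¹' Set.Iio ((u x + u z) / 2)) ∈ nhdsWithin x X := by
    rw [Filter.biInter_finset_mem]
    intro u hu
    exact (hcont u hu x hx) (Iio_mem_nhds (by linarith [hkey u hu]))
  obtain ⟨V, hVopen, hzV, hVsub⟩ := mem_nhdsWithin.mp hA
  obtain ⟨W, hWopen, hxW, hWsub⟩ := mem_nhdsWithin.mp hB
  refine ⟨1/2, by norm_num, by norm_num, V, W, hVopen, hWopen, ⟨hzV, hz⟩, ⟨hxW, hx⟩, ?_⟩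
  intro z' hz' x' hx'
  have hz'X := hz'.2
  have hx'X := hx'.2
  have hlt : ∀ u ∈ U, u x' < u z' := by
    intro u hu
    have h1 := hVsub hz'
    have h2 := hWsub hx'
    simp only [Set.mem_iInter, Set.mem_preimage, Set.mem_Ioi, Set.mem_Iio] at h1 h2
    linarith [h1 u hu, h2 u hu]
  refine ⟨(hrep z' hz'X x' hx'X).mpr fun u hu => (hlt u hu).le, fun hR => ?_⟩
  exact absurd ((hrep x' hx'X z' hz'X).mp hR u0 hu0U) (not_le.mpr (hlt u0 hu0U))
end

section
/- Let ≿ be a continuous preference on a convex metric-vector space X satisfying midpoint continuity. Suppose (K_n, x_n) is a sequence of nonempty compact convex subsets K_n ⊆ X and points x_n ∈ K_n, with K_n → K in the Hausdorff metric and x_n → x, and each x_n is ≿-maximal in K_n. Then x is ≿-maximal in K. -/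
open Filter

/-- Simple Maximum Theorem: if a continuous, midpoint continuous preference
on a convex subset X of a normed space, nonempty compact convex feasible sets Kₙ → K in
the Hausdorff metric, and maximal elements xₙ ∈ Kₙ with xₙ → x, then x is maximal in K. -/
theorem stmt_2 {E : Type*} [NormedAddCommGroup E] [NormedSpace ℝ E]
    (X : Set E) (hX : Convex ℝ X)
    (R : E → E → Prop)
    (hrefl : ∀ x ∈ X, R x x)
    (htrans : ∀ x ∈ X, ∀ y ∈ X, ∀ z ∈ X, R x y → R y z → R x z)
    (hclosed : IsClosed {p : X × X | R p.1.1 p.2.1})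
    (hmid : ∀ x ∈ X, ∀ y ∈ X, (R y x ∧ ¬ R x y) →
      ∃ α : ℝ, 0 ≤ α ∧ α < 1 ∧ ∃ V W : Set E, IsOpen V ∧ IsOpen W ∧
        (α • x + (1 - α) • y) ∈ V ∩ X ∧ x ∈ W ∩ X ∧
        ∀ z' ∈ V ∩ X, ∀ x' ∈ W ∩ X, (R z' x' ∧ ¬ R x' z'))
    (K : ℕ → Set E) (Kl : Set E) (x : ℕ → E) (xl : E)
    (hKn : ∀ n, (K n).Nonempty ∧ IsCompact (K n) ∧ Convex ℝ (K n) ∧ K n ⊆ X)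
    (hKl : Kl.Nonempty) (hKlc : IsCompact Kl) (hKlX : Kl ⊆ X)
    (hKconv : Tendsto (fun n => Metric.hausdorffDist (K n) Kl) atTop (nhds 0))
    (hxconv : Tendsto x atTop (nhds xl))
    (hxmax : ∀ n, x n ∈ K n ∧ ∀ y ∈ K n, R y (x n) → R (x n) y) :
    xl ∈ Kl ∧ ∀ y ∈ Kl, R y xl → R xl y := by

  have hKne : ∀ n, (K n).Nonempty := fun n => (hKn n).1
  have hKcomp : ∀ n, IsCompact (K n) := fun n => (hKn n).2.1
  have hfin : ∀ n, EMetric.hausdorffEdist (K n) Kl ≠ ⊤ := fun n =>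
    Metric.hausdorffEdist_ne_top_of_nonempty_of_bounded (hKne n) hKl
      (hKcomp n).isBounded hKlc.isBounded
  have hxlKl : xl ∈ Kl := by
    have h1 : Tendsto (fun n => Metric.infDist (x n) Kl) atTop (nhds (Metric.infDist xl Kl)) :=
      ((Metric.continuous_infDist_pt Kl).tendsto xl).comp hxconv
    have h2 : Metric.infDist xl Kl ≤ 0 := by
      refine le_of_tendsto_of_tendsto h1 hKconv (Filter.Eventually.of_forall fun n => ?_)
      exact Metric.infDist_le_hausdorffDist_of_mem (hxmax n).1 (hfin n)
    exact (hKlc.isClosed.mem_iff_infDist_zero hKl).2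
      (le_antisymm h2 Metric.infDist_nonneg)
  refine ⟨hxlKl, fun y hy hRyxl => ?_⟩
  by_contra hnR
  obtain ⟨α, hα0, hα1, V, W, hV, hW, hzV, hxlW, hstrict⟩ :=
    hmid xl (hKlX hxlKl) y (hKlX hy) ⟨hRyxl, hnR⟩
  choose yn hyn hynd using fun n => (hKcomp n).exists_infDist_eq_dist (hKne n) y
  have hyconv : Tendsto yn atTop (nhds y) := by
    rw [tendsto_iff_dist_tendsto_zero]
    have heq : ∀ n, dist (yn n) y = Metric.infDist y (K n) := fun n => by
      rw [dist_comm]; exact (hynd n).symm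
    refine squeeze_zero (fun n => dist_nonneg) (fun n => ?_) hKconv
    rw [heq n]
    calc Metric.infDist y (K n) ≤ Metric.hausdorffDist Kl (K n) :=
          Metric.infDist_le_hausdorffDist_of_mem hy
            (by rw [EMetric.hausdorffEdist_comm]; exact hfin n)
      _ = Metric.hausdorffDist (K n) Kl := Metric.hausdorffDist_comm
  have hzconv : Tendsto (fun n => α • x n + (1 - α) • yn n) atTop
      (nhds (α • xl + (1 - α) • y)) :=
    (hxconv.const_smul α).add (hyconv.const_smul (1 - α))
  have hV' : ∀ᶠ n in atTop, (α • x n + (1 - α) • yn n) ∈ V :=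
    hzconv.eventually (hV.mem_nhds hzV.1)
  have hW' : ∀ᶠ n in atTop, x n ∈ W := hxconv.eventually (hW.mem_nhds hxlW.1)
  obtain ⟨n, hnV, hnW⟩ := (hV'.and hW').exists
  have hznK : (α • x n + (1 - α) • yn n) ∈ K n :=
    (hKn n).2.2.1 (hxmax n).1 (hyn n) hα0 (by linarith) (by ring)
  have hs := hstrict _ ⟨hnV, (hKn n).2.2.2 hznK⟩ (x n) ⟨hnW, (hKn n).2.2.2 (hxmax n).1⟩
  exact hs.2 ((hxmax n).2 _ hznK hs.1)
end

section
/- Let ≿_n, ≿ be continuous preferences on a metric space X with graphs converging in the Hausdorff metric, let K_n, K be nonempty compact sets with K_n → K in the Hausdorff metric, and suppose x_n ∈ Max(≿_n, K_n) with x_n → x. If additionally every Hausdorff limit of a convergent sequence (D_n) with D_n a maximal ≿_n-domain relative to K_n is a maximal ≿-domain relative to K, then x ∈ Max(≿, K). -/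
open Filter
open scoped ENNReal

/-- `R` is complete on `A`. -/
def CompleteOn {X : Type*} (R : X → X → Prop) (A : Set X) : Prop :=
  ∀ x ∈ A, ∀ y ∈ A, R x y ∨ R y x

/-- `A` is a maximal `R`-domain relative to `B`. -/
def MaxDomainRel {X : Type*} (R : X → X → Prop) (B A : Set X) : Prop :=
  A ⊆ B ∧ CompleteOn R A ∧ ∀ A' : Set X, A ⊆ A' → A' ⊆ B → CompleteOn R A' → A' = A

/- ===== auxiliary lemmas ===== -/

/-- Completeness passes to the closure when the graph is closed. -/
lemma aux_completeOn_closure {X : Type*} [MetricSpace X] {R : X → X → Prop}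
    (hcl : IsClosed {p : X × X | R p.1 p.2}) {A : Set X} (h : CompleteOn R A) :
    CompleteOn R (closure A) := by
  have hC : IsClosed {p : X × X | R p.1 p.2 ∨ R p.2 p.1} := by
    have h2 : IsClosed {p : X × X | R p.2 p.1} :=
      hcl.preimage (continuous_snd.prodMk continuous_fst)
    exact hcl.union h2
  intro a ha b hb
  have hsub : A ×ˢ A ⊆ {p : X × X | R p.1 p.2 ∨ R p.2 p.1} := fun p hp =>
    h p.1 hp.1 p.2 hp.2
  have : closure (A ×ˢ A) ⊆ {p : X × X | R p.1 p.2 ∨ R p.2 p.1} :=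
    closure_minimal hsub hC
  have hmem : (a, b) ∈ closure (A ×ˢ A) := by
    rw [closure_prod_eq]; exact ⟨ha, hb⟩
  exact this hmem

/-- Every point of `B` lies in some maximal `R`-domain relative to `B`. -/
lemma aux_exists_maxDomain {X : Type*} (R : X → X → Prop) (hrefl : Reflexive R)
    (B : Set X) {x : X} (hx : x ∈ B) :
    ∃ D : Set X, x ∈ D ∧ MaxDomainRel R B D := by
  set S : Set (Set X) := {A | A ⊆ B ∧ x ∈ A ∧ CompleteOn R A} with hS
  have hxS : ({x} : Set X) ∈ S := by
    refine ⟨Set.singleton_subset_iff.mpr hx, rfl, ?_⟩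
    intro a ha b hb
    rw [Set.mem_singleton_iff] at ha hb; subst ha; subst hb
    exact Or.inl (hrefl _)
  obtain ⟨m, hxm, hmax⟩ := zorn_subset_nonempty S (fun c hcS hchain hcne => by
    refine ⟨⋃₀ c, ⟨?_, ?_, ?_⟩, fun s hs => Set.subset_sUnion_of_mem hs⟩
    · exact Set.sUnion_subset fun s hs => (hcS hs).1
    · obtain ⟨s, hs⟩ := hcne
      exact Set.mem_sUnion.mpr ⟨s, hs, (hcS hs).2.1⟩
    · intro a ha b hb
      obtain ⟨s, hs, has⟩ := ha
      obtain ⟨t, ht, hbt⟩ := hb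
      rcases hchain.total hs ht with hst | hts
      · exact (hcS ht).2.2 a (hst has) b hbt
      · exact (hcS hs).2.2 a has b (hts hbt)) _ hxS
  refine ⟨m, hmax.1.2.1, hmax.1.1, hmax.1.2.2, fun A' hmA' hA'B hA'c => ?_⟩
  have hA'S : A' ∈ S := ⟨hA'B, hmA' hmax.1.2.1, hA'c⟩
  exact le_antisymm (hmax.2 hA'S hmA') hmA'

/-- A maximal `R`-domain relative to a closed set is closed (closed graph). -/
lemma aux_maxDomain_isClosed {X : Type*} [MetricSpace X] {R : X → X → Prop}
    (hcl : IsClosed {p : X × X | R p.1 p.2}) {B D : Set X} (hB : IsClosed B)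
    (hD : MaxDomainRel R B D) : IsClosed D := by
  have h := hD.2.2 (closure D) subset_closure (closure_minimal hD.1 hB)
    (aux_completeOn_closure hcl hD.2.1)
  rw [← h]; exact isClosed_closure

/-- Gorno–Rivello Theorem 1: a best element of a maximal domain is maximal. -/
lemma aux_gr1 {X : Type*} {R : X → X → Prop} (hrefl : Reflexive R) (htrans : Transitive R)
    {B D : Set X} (hD : MaxDomainRel R B D) {x : X} (hx : x ∈ D)
    (hbest : ∀ d ∈ D, R x d) {y : X} (hy : y ∈ B) (hyx : R y x) : R x y := by
  have hyD : y ∈ D := by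
    have hcomp : CompleteOn R (insert y D) := by
      intro a ha b hb
      rcases ha with rfl | haD
      · rcases hb with rfl | hbD
        · exact Or.inl (hrefl _)
        · exact Or.inl (htrans hyx (hbest b hbD))
      · rcases hb with rfl | hbD
        · exact Or.inr (htrans hyx (hbest a haD))
        · exact hD.2.1 a haD b hbD
    have := hD.2.2 (insert y D) (Set.subset_insert _ _)
      (Set.insert_subset hy hD.1) hcomp
    rw [← this]; exact Set.mem_insert _ _
  exact hbest y hyD

/-- eedist to a convergent point tends to zero. -/
lemma aux_edist_tendsto {X : Type*} [MetricSpace X] {u : ℕ → X} {a : X}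
    (h : Tendsto u atTop (nhds a)) :
    Tendsto (fun k => edist a (u k)) atTop (nhds 0) := by
  have h' : Tendsto (fun k => dist (u k) a) atTop (nhds 0) :=
    tendsto_iff_dist_tendsto_zero.mp h
  have heq : (fun k => edist a (u k)) = fun k => ENNReal.ofReal (dist (u k) a) :=
    funext fun k => by rw [edist_dist, dist_comm]
  rw [heq]
  have := (ENNReal.continuous_ofReal.tendsto 0).comp h'
  simpa [Function.comp_def] using this

/-- Limit points of points in Hausdorff-converging sets lie in the closed limit set. -/
lemma aux_mem_limit {X : Type*} [MetricSpace X] {S : ℕ → Set X} {T : Set X}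
    (hT : IsClosed T)
    (hconv : Tendsto (fun k => EMetric.hausdorffEdist (S k) T) atTop (nhds 0))
    {p : ℕ → X} {q : X} (hp : ∀ k, p k ∈ S k)
    (hq : Tendsto (fun k => edist q (p k)) atTop (nhds 0)) : q ∈ T := by
  have h1 : ∀ k, EMetric.infEdist q T ≤
      EMetric.hausdorffEdist (S k) T + edist q (p k) := fun k =>
    le_trans EMetric.infEdist_le_infEdist_add_edist
      (add_le_add (EMetric.infEdist_le_hausdorffEdist_of_mem (hp k)) le_rfl)
  have h2 : Tendsto (fun k => EMetric.hausdorffEdist (S k) T + edist q (p k))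
      atTop (nhds 0) := by
    have := hconv.add hq
    simpa using this
  have h3 : EMetric.infEdist q T ≤ 0 := ge_of_tendsto' h2 h1
  have h4 : EMetric.infEdist q T = 0 := le_antisymm h3 zero_le
  have : q ∈ closure T := EMetric.mem_closure_iff_infEdist_zero.mpr h4
  rwa [hT.closure_eq] at this

/-- The union of Hausdorff-converging compact sets with the limit is compact. -/
lemma aux_compact_union {X : Type*} [MetricSpace X] (K : ℕ → Set X) (Kl : Set X)
    (hKn : ∀ n, (K n).Nonempty ∧ IsCompact (K n))
    (hKl : Kl.Nonempty) (hKlc : IsCompact Kl)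
    (hKconv : Tendsto (fun n => Metric.hausdorffDist (K n) Kl) atTop (nhds 0)) :
    IsCompact (Kl ∪ ⋃ n, K n) := by
  apply IsSeqCompact.isCompact
  intro z hz
  by_cases hA : (∃ᶠ k in atTop, z k ∈ Kl) ∨ ∃ n, ∃ᶠ k in atTop, z k ∈ K n
  · -- infinitely many in a fixed compact set
    obtain ⟨C, hCc, hCU, hfreq⟩ :
        ∃ C : Set X, IsCompact C ∧ C ⊆ Kl ∪ ⋃ n, K n ∧ ∃ᶠ k in atTop, z k ∈ C := by
      rcases hA with h | ⟨n, h⟩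
      · exact ⟨Kl, hKlc, Set.subset_union_left, h⟩
      · exact ⟨K n, (hKn n).2,
          (Set.subset_iUnion K n).trans Set.subset_union_right, h⟩
    obtain ⟨ψ, hψ, hmem⟩ := extraction_of_frequently_atTop hfreq
    obtain ⟨a, haC, φ, hφ, hconv⟩ := hCc.tendsto_subseq hmem
    exact ⟨a, hCU haC, ψ ∘ φ, hψ.comp hφ, hconv⟩
  · push_neg at hA
    obtain ⟨h1, h2⟩ := hA
    have h2' : ∀ n, ∀ᶠ k in atTop, z k ∉ K n := fun n => h2 n
    -- infDist to Kl tends to zero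
    have hfin : ∀ m, EMetric.hausdorffEdist (K m) Kl ≠ ⊤ := fun m =>
      Metric.hausdorffEdist_ne_top_of_nonempty_of_bounded (hKn m).1 hKl
        (hKn m).2.isBounded hKlc.isBounded
    have hinf : Tendsto (fun k => Metric.infDist (z k) Kl) atTop (nhds 0) := by
      rw [Metric.tendsto_atTop]
      intro ε hε
      rw [Metric.tendsto_atTop] at hKconv
      obtain ⟨N, hN⟩ := hKconv ε hε
      have hev : ∀ᶠ k in atTop, (∀ n < N, z k ∉ K n) ∧ z k ∉ Kl := by
        refine Filter.Eventually.and ?_ h1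
        have := Filter.eventually_all_finite (Set.finite_Iio N)
          (p := fun n k => z k ∉ K n) (l := atTop)
        exact this.mpr (fun n _ => h2' n)
      obtain ⟨M, hM⟩ := hev.exists_forall_of_atTop
      refine ⟨M, fun k hk => ?_⟩
      obtain ⟨hnot, hnotKl⟩ := hM k hk
      obtain hKlmem | hKm := hz k
      · exact absurd hKlmem hnotKl
      · obtain ⟨m, hm⟩ := Set.mem_iUnion.mp hKm
        have hmN : N ≤ m := by
          by_contra hc
          exact hnot m (lt_of_not_ge hc) hm
        have := Metric.infDist_le_hausdorffDist_of_mem hm (hfin m)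
        have h5 := hN m hmN
        rw [Real.dist_eq, sub_zero] at h5 ⊢
        rw [abs_of_nonneg Metric.infDist_nonneg]
        rw [abs_of_nonneg Metric.hausdorffDist_nonneg] at h5
        exact lt_of_le_of_lt this h5
    -- pick nearest points in Kl
    have hw : ∀ k, ∃ w ∈ Kl, Metric.infDist (z k) Kl = dist (z k) w := fun k =>
      hKlc.exists_infDist_eq_dist hKl (z k)
    choose w hwKl hwdist using hw
    obtain ⟨a, haKl, φ, hφ, hwconv⟩ := hKlc.tendsto_subseq hwKl
    refine ⟨a, Set.subset_union_left haKl, φ, hφ, ?_⟩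
    rw [tendsto_iff_dist_tendsto_zero]
    have hb : ∀ j, dist (z (φ j)) a ≤
        Metric.infDist (z (φ j)) Kl + dist (w (φ j)) a := fun j => by
      rw [hwdist (φ j)]; exact dist_triangle _ _ _
    have hsum : Tendsto (fun j => Metric.infDist (z (φ j)) Kl + dist (w (φ j)) a)
        atTop (nhds 0) := by
      have t1 : Tendsto (fun j => Metric.infDist (z (φ j)) Kl) atTop (nhds 0) :=
        hinf.comp hφ.tendsto_atTop
      have t2 : Tendsto (fun j => dist (w (φ j)) a) atTop (nhds 0) :=
        tendsto_iff_dist_tendsto_zero.mp hwconv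
      simpa using t1.add t2
    exact squeeze_zero (fun j => dist_nonneg) hb hsum

/-- General Maximum Theorem: with continuous preferences ≿ₙ → ≿,
compact sets Kₙ → K, maximal elements xₙ → x, and upper hemicontinuity of maximal
domains of comparability, x is ≿-maximal in K. -/
theorem stmt_9 {X : Type*} [MetricSpace X]
    (Rn : ℕ → X → X → Prop) (R : X → X → Prop)
    (hrefln : ∀ n, Reflexive (Rn n)) (htransn : ∀ n, Transitive (Rn n))
    (hrefl : Reflexive R) (htrans : Transitive R)
    (hclosedn : ∀ n, IsClosed {p : X × X | Rn n p.1 p.2})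
    (hclosed : IsClosed {p : X × X | R p.1 p.2})
    (hRconv : Tendsto
      (fun n => EMetric.hausdorffEdist {p : X × X | Rn n p.1 p.2} {p : X × X | R p.1 p.2})
      atTop (nhds (0 : ℝ≥0∞)))
    (K : ℕ → Set X) (Kl : Set X)
    (hKn : ∀ n, (K n).Nonempty ∧ IsCompact (K n))
    (hKl : Kl.Nonempty) (hKlc : IsCompact Kl)
    (hKconv : Tendsto (fun n => Metric.hausdorffDist (K n) Kl) atTop (nhds 0))
    (x : ℕ → X) (xl : X)
    (hxconv : Tendsto x atTop (nhds xl))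
    (hxmax : ∀ n, x n ∈ K n ∧ ∀ y ∈ K n, Rn n y (x n) → Rn n (x n) y)
    (hdomconv : ∀ (D : ℕ → Set X), (∀ n, MaxDomainRel (Rn n) (K n) (D n)) →
      ∀ (φ : ℕ → ℕ), StrictMono φ → ∀ (Dl : Set X), Dl.Nonempty → IsCompact Dl →
        Tendsto (fun k => Metric.hausdorffDist (D (φ k)) Dl) atTop (nhds 0) →
        MaxDomainRel R Kl Dl) :
    xl ∈ Kl ∧ ∀ y ∈ Kl, R y xl → R xl y := by
  -- the ambient compact set
  set U : Set X := Kl ∪ ⋃ n, K n with hUdef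
  have hU : IsCompact U := aux_compact_union K Kl hKn hKl hKlc hKconv
  -- maximal domains containing the maximal elements
  have hex : ∀ n, ∃ D : Set X, x n ∈ D ∧ MaxDomainRel (Rn n) (K n) D := fun n =>
    aux_exists_maxDomain (Rn n) (hrefln n) (K n) (hxmax n).1
  choose D hxD hD using hex
  have hDcl : ∀ n, IsClosed (D n) := fun n =>
    aux_maxDomain_isClosed (hclosedn n) (hKn n).2.isClosed (hD n)
  have hDcomp : ∀ n, IsCompact (D n) := fun n =>
    (hKn n).2.of_isClosed_subset (hDcl n) (hD n).1
  have hDU : ∀ n, D n ⊆ U := fun n =>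
    (hD n).1.trans ((Set.subset_iUnion K n).trans Set.subset_union_right)
  -- move to the hyperspace of nonempty compact subsets of U
  haveI : CompactSpace U := isCompact_iff_compactSpace.mp hU
  have hval : Isometry (Subtype.val : U → X) := isometry_subtype_coe
  have hpreim : ∀ n, (Subtype.val : U → X) '' (Subtype.val ⁻¹' (D n)) = D n := fun n => by
    rw [Set.image_preimage_eq_inter_range, Subtype.range_coe,
      Set.inter_eq_self_of_subset_left (hDU n)]
  set E : ℕ → TopologicalSpace.NonemptyCompacts U := fun n =>
    ⟨⟨Subtype.val ⁻¹' (D n),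
      ((hDcl n).preimage continuous_subtype_val).isCompact⟩,
      ⟨⟨x n, hDU n (hxD n)⟩, hxD n⟩⟩ with hEdef
  obtain ⟨L, -, φ, hφ, hLconv⟩ :=
    isCompact_univ.tendsto_subseq (x := E) (fun n => Set.mem_univ _)
  set Dl : Set X := Subtype.val '' (L : Set U) with hDldef
  have hDlcomp : IsCompact Dl := L.isCompact.image continuous_subtype_val
  have hDlne : Dl.Nonempty := L.nonempty.image _
  -- Hausdorff distance convergence (real-valued)
  have hdist0 : Tendsto (fun k => dist (E (φ k)) L) atTop (nhds 0) :=
    tendsto_iff_dist_tendsto_zero.mp hLconv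
  have hdistEq : ∀ k, Metric.hausdorffDist (D (φ k)) Dl = dist (E (φ k)) L := fun k => by
    rw [Metric.NonemptyCompacts.dist_eq, hDldef, ← hpreim (φ k)]
    exact Metric.hausdorffDist_image hval
  have hDconv : Tendsto (fun k => Metric.hausdorffDist (D (φ k)) Dl) atTop (nhds 0) := by
    simp only [hdistEq]; exact hdist0
  -- Hausdorff edistance convergence
  have hedistEq : ∀ k, EMetric.hausdorffEdist (D (φ k)) Dl
      = ENNReal.ofReal (dist (E (φ k)) L) := fun k => by
    rw [hDldef, ← hpreim (φ k), EMetric.hausdorffEdist, EMetric.hausdorffEdist_image hval, ← edist_dist]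
    rfl
  have hDedist : Tendsto (fun k => EMetric.hausdorffEdist (D (φ k)) Dl)
      atTop (nhds 0) := by
    simp only [hedistEq]
    have := (ENNReal.continuous_ofReal.tendsto 0).comp hdist0
    simpa [Function.comp_def] using this
  -- the limit domain is a maximal R-domain relative to Kl
  have hDl : MaxDomainRel R Kl Dl := hdomconv D hD φ hφ Dl hDlne hDlcomp hDconv
  -- xl belongs to Dl
  have hxlDl : xl ∈ Dl :=
    aux_mem_limit hDlcomp.isClosed hDedist (fun k => hxD (φ k))
      (aux_edist_tendsto (hxconv.comp hφ.tendsto_atTop))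
  -- xl is R-best in Dl
  have hbest : ∀ d ∈ Dl, R xl d := by
    intro y hy
    -- approximate y by points of D (φ k)
    have hfin : ∀ k, EMetric.hausdorffEdist (D (φ k)) Dl ≠ ⊤ := fun k =>
      Metric.hausdorffEdist_ne_top_of_nonempty_of_bounded
        ⟨x (φ k), hxD (φ k)⟩ hDlne (hDcomp (φ k)).isBounded hDlcomp.isBounded
    have hyk : ∀ k, ∃ z ∈ D (φ k),
        edist y z < EMetric.hausdorffEdist (D (φ k)) Dl + (((k : ℝ≥0∞) + 1))⁻¹ := by
      intro k
      have h1 : EMetric.infEdist y (D (φ k)) ≤ EMetric.hausdorffEdist (D (φ k)) Dl := by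
        rw [EMetric.hausdorffEdist, EMetric.hausdorffEdist_comm]
        exact EMetric.infEdist_le_hausdorffEdist_of_mem hy
      have h2 : EMetric.hausdorffEdist (D (φ k)) Dl
          < EMetric.hausdorffEdist (D (φ k)) Dl + (((k : ℝ≥0∞) + 1))⁻¹ :=
        ENNReal.lt_add_right (hfin k) (ENNReal.inv_ne_zero.mpr (by simp))
      exact EMetric.infEdist_lt_iff.mp (lt_of_le_of_lt h1 h2)
    choose yk hykD hyklt using hyk
    have hinvconv : Tendsto (fun k : ℕ => (((k : ℝ≥0∞) + 1))⁻¹) atTop (nhds 0) := by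
      have h1 : Tendsto (fun k : ℕ => ((k + 1 : ℕ) : ℝ≥0∞)⁻¹) atTop (nhds 0) :=
        ENNReal.tendsto_inv_nat_nhds_zero.comp (tendsto_add_atTop_nat 1)
      exact h1.congr fun k => by push_cast; ring
    have hyconv : Tendsto (fun k => edist y (yk k)) atTop (nhds 0) := by
      have hub : Tendsto (fun k => EMetric.hausdorffEdist (D (φ k)) Dl
          + (((k : ℝ≥0∞) + 1))⁻¹) atTop (nhds 0) := by
        have := hDedist.add hinvconv
        simpa using this
      exact tendsto_of_tendsto_of_tendsto_of_le_of_le tendsto_const_nhds hub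
        (fun k => zero_le) (fun k => (hyklt k).le)
    -- pass to the limit in the graphs
    have hRk : ∀ k, Rn (φ k) (x (φ k)) (yk k) := by
      intro k
      have hykK : yk k ∈ K (φ k) := (hD (φ k)).1 (hykD k)
      rcases (hD (φ k)).2.1 (x (φ k)) (hxD (φ k)) (yk k) (hykD k) with h | h
      · exact h
      · exact (hxmax (φ k)).2 (yk k) hykK h
    have hgconv : Tendsto (fun k => EMetric.hausdorffEdist
        {p : X × X | Rn (φ k) p.1 p.2} {p : X × X | R p.1 p.2}) atTop (nhds 0) :=
      hRconv.comp hφ.tendsto_atTop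
    have hpconv : Tendsto (fun k => edist ((xl, y) : X × X) (x (φ k), yk k))
        atTop (nhds 0) := by
      have h1 : Tendsto (fun k => edist xl (x (φ k))) atTop (nhds 0) :=
        aux_edist_tendsto (hxconv.comp hφ.tendsto_atTop)
      have := h1.max hyconv
      simp only [Prod.edist_eq]
      simpa using this
    have : ((xl, y) : X × X) ∈ {p : X × X | R p.1 p.2} :=
      aux_mem_limit hclosed hgconv (fun k => hRk k) hpconv
    exact this
  have hxlKl : xl ∈ Kl := hDl.1 hxlDl
  exact ⟨hxlKl, fun y hy hyx => aux_gr1 hrefl htrans hDl hxlDl hbest hy hyx⟩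
end

section
/- Let ≿ be a reflexive transitive relation on a set X, let K ⊆ X, let D be a maximal ≿-domain relative to K, and suppose x ∈ D satisfies x ≿ z for all z ∈ D. Then x is ≿-maximal in K. -/
/-- A best element of a maximal ≿-domain relative to K is ≿-maximal in K. -/
theorem stmt_10 {X : Type*} (R : X → X → Prop)
    (hrefl : Reflexive R) (htrans : Transitive R)
    (K D : Set X) (hDK : D ⊆ K)
    (hcomp : ∀ x ∈ D, ∀ y ∈ D, R x y ∨ R y x)
    (hmax : ∀ D' : Set X, D ⊆ D' → D' ⊆ K → (∀ x ∈ D', ∀ y ∈ D', R x y ∨ R y x) → D' = D)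
    (x : X) (hx : x ∈ D) (hbest : ∀ z ∈ D, R x z) :
    ∀ y ∈ K, R y x → R x y := by
  intro y hyK hyx
  have hyD : y ∈ D := by
    have hcomp' : ∀ a ∈ insert y D, ∀ b ∈ insert y D, R a b ∨ R b a := by
      rintro a (ha | haD) b (hb | hbD)
      · subst ha; subst hb; exact Or.inl (hrefl _)
      · subst ha; exact Or.inl (htrans hyx (hbest b hbD))
      · subst hb; exact Or.inr (htrans hyx (hbest a haD))
      · exact hcomp a haD b hbD
    have := hmax (insert y D) (Set.subset_insert y D)
      (Set.insert_subset hyK hDK) hcomp'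
    rw [← this]; exact Set.mem_insert y D
  exact hbest y hyD
end

section
/- Let X be [0,1] and define ≿ as the relation {(x,y) ∈ [0,0.5)² : x = y} ∪ [0.5,1]². Then ≿ is a continuous (closed) reflexive transitive relation, and for K_n = [0.5 − 0.5/n, 1], the singleton D_n = {0.5 − 0.5/n} is a maximal ≿-domain relative to K_n, the sets D_n converge to {0.5}, yet {0.5} is not a maximal ≿-domain relative to K = [0.5, 1]. -/
open Filter

lemma hd_singleton (x y : ℝ) : Metric.hausdorffDist {x} {y} = dist x y := by
  simp [Metric.hausdorffDist, EMetric.hausdorffEdist_def, EMetric.infEdist_singleton,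
    dist_edist, edist_comm x y]

/-- The relation {(x,y) ∈ [0,0.5)² : x = y} ∪ [0.5,1]² on [0,1] is a
continuous (closed) reflexive transitive relation; Dₙ = {0.5 − 0.5/n} is a maximal
domain relative to Kₙ = [0.5 − 0.5/n, 1]; Dₙ → {0.5} in the Hausdorff metric; yet
{0.5} is not a maximal domain relative to [0.5, 1]. -/
theorem stmt_12 :
    let R : ℝ → ℝ → Prop := fun x y =>
      (x = y ∧ x ∈ Set.Ico (0:ℝ) (1/2)) ∨ (x ∈ Set.Icc (1/2:ℝ) 1 ∧ y ∈ Set.Icc (1/2:ℝ) 1)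
    (∀ x ∈ Set.Icc (0:ℝ) 1, R x x) ∧
    (∀ x y z : ℝ, R x y → R y z → R x z) ∧
    IsClosed {p : ℝ × ℝ | R p.1 p.2} ∧
    (∀ n : ℕ, MaxDomainRel R (Set.Icc (1/2 - 1/2/(n+1) : ℝ) 1) {(1/2 - 1/2/(n+1) : ℝ)}) ∧
    Tendsto (fun n : ℕ => Metric.hausdorffDist {(1/2 - 1/2/(n+1) : ℝ)} ({(1/2 : ℝ)} : Set ℝ))
      atTop (nhds 0) ∧
    ¬ MaxDomainRel R (Set.Icc (1/2:ℝ) 1) {(1/2 : ℝ)} := by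
  intro R
  refine ⟨?_, ?_, ?_, ?_, ?_, ?_⟩
  · -- reflexive
    intro x hx
    rcases lt_or_ge x (1/2) with h | h
    · exact Or.inl ⟨rfl, hx.1, h⟩
    · exact Or.inr ⟨⟨h, hx.2⟩, h, hx.2⟩
  · -- transitive
    rintro x y z (⟨rfl, hx⟩ | ⟨hx, hy⟩) (⟨rfl, hy'⟩ | ⟨hy', hz⟩)
    · exact Or.inl ⟨rfl, hx⟩
    · exact Or.inr ⟨hy', hz⟩
    · exact absurd hy.1 (not_le.mpr hy'.2)
    · exact Or.inr ⟨hx, hz⟩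
  · -- closed
    have : {p : ℝ × ℝ | R p.1 p.2} =
        ({p : ℝ × ℝ | p.1 = p.2} ∩ (Set.Icc (0:ℝ) (1/2) ×ˢ Set.univ)) ∪
        (Set.Icc (1/2:ℝ) 1 ×ˢ Set.Icc (1/2:ℝ) 1) := by
      ext ⟨x, y⟩
      simp only [Set.mem_setOf_eq, Set.mem_union, Set.mem_inter_iff, Set.mem_prod,
        Set.mem_univ, and_true, Set.mem_Icc, Set.mem_Ico, R]
      constructor
      · rintro (⟨rfl, h0, h1⟩ | h)
        · exact Or.inl ⟨rfl, h0, h1.le⟩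
        · exact Or.inr h
      · rintro (⟨rfl, h0, h1⟩ | h)
        · rcases lt_or_ge x (1/2) with h' | h'
          · exact Or.inl ⟨rfl, h0, h'⟩
          · exact Or.inr ⟨⟨h', by linarith⟩, ⟨h', by linarith⟩⟩
        · exact Or.inr h
    rw [this]
    exact ((isClosed_eq continuous_fst continuous_snd).inter
      (isClosed_Icc.prod isClosed_univ)).union (isClosed_Icc.prod isClosed_Icc)
  · -- maximal domains
    intro n
    have hn1 : (0:ℝ) < (n:ℝ) + 1 := by positivity
    have h1 : (0:ℝ) < 1/2/((n:ℝ)+1) := by positivity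
    have h2 : 1/2/((n:ℝ)+1) ≤ 1/2 := by
      rw [div_le_iff₀ hn1]; nlinarith
    generalize ha : (1/2 - 1/2/((n:ℝ)+1) : ℝ) = a
    have ha0 : 0 ≤ a := by rw [← ha]; linarith
    have halt : a < 1/2 := by rw [← ha]; linarith
    have ha1 : a ≤ 1 := by linarith
    refine ⟨?_, ?_, ?_⟩
    · intro x hx
      rw [Set.mem_singleton_iff] at hx
      subst hx
      exact ⟨le_refl _, ha1⟩
    · intro x hx y hy
      rw [Set.mem_singleton_iff] at hx hy
      subst hx; subst hy
      left
      left
      exact ⟨rfl, Set.mem_Ico.mpr ⟨ha0, halt⟩⟩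
    · intro A' hsub hsubB hcomp
      apply Set.eq_singleton_iff_unique_mem.mpr
      refine ⟨hsub rfl, ?_⟩
      intro y hy
      have hna : a ∉ Set.Icc (1/2:ℝ) 1 := by
        simp only [Set.mem_Icc, not_and]; intro h; linarith
      rcases hcomp a (hsub rfl) y hy with (⟨h, _⟩ | ⟨h2, _⟩) | (⟨h, _⟩ | ⟨_, h2⟩)
      · exact h.symm
      · exact absurd h2 hna
      · exact h
      · exact absurd h2 hna
  · -- Hausdorff convergence
    have : ∀ n : ℕ, Metric.hausdorffDist {(1/2 - 1/2/(n+1) : ℝ)} ({(1/2 : ℝ)} : Set ℝ)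
        = 1/2/(n+1) := by
      intro n
      rw [hd_singleton]
      have hn1 : (0:ℝ) < 1/2/((n:ℝ)+1) := by positivity
      rw [Real.dist_eq]
      rw [abs_of_nonpos (by linarith)]
      ring
    simp only [this]
    have := tendsto_one_div_add_atTop_nhds_zero_nat (𝕜 := ℝ)
    have h2 : Tendsto (fun n : ℕ => (1/2) * (1 / ((n:ℝ) + 1))) atTop (nhds ((1/2)*0)) :=
      this.const_mul (1/2)
    simpa [div_eq_mul_inv, mul_comm, mul_assoc, one_div] using h2
  · -- not maximal
    rintro ⟨_, _, hmax⟩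
    have hcomp : CompleteOn R (Set.Icc (1/2:ℝ) 1) := by
      intro x hx y hy
      exact Or.inl (Or.inr ⟨hx, hy⟩)
    have := hmax (Set.Icc (1/2:ℝ) 1)
      (by intro x hx; rw [Set.mem_singleton_iff] at hx; subst hx
          exact ⟨le_refl _, by norm_num⟩)
      (le_refl _) hcomp
    have h1 : (1:ℝ) ∈ Set.Icc (1/2:ℝ) 1 := ⟨by norm_num, le_refl _⟩
    rw [this] at h1
    norm_num at h1
end

section
/- Let ≿ be the componentwise (product) order on X = [0,1]², let K_n = {(x₁,x₂) ∈ X : x₂ ≤ n(1 − x₁)}. Then each K_n is nonempty and compact, K_n → [0,1]² in the Hausdorff metric, the point (1,0) is ≿-maximal in K_n for every n, but (1,0) is not ≿-maximal in [0,1]². -/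
open Filter

/-- With the product order on X = [0,1]² and
Kₙ = {(x₁,x₂) ∈ X : x₂ ≤ n(1 − x₁)}, each Kₙ is nonempty compact, Kₙ → X in the
Hausdorff metric, (1,0) is maximal in every Kₙ, but (1,0) is not maximal in X. -/
theorem stmt_13 :
    let X : Set (ℝ × ℝ) := Set.Icc (0, 0) (1, 1)
    let R : ℝ × ℝ → ℝ × ℝ → Prop := fun p q => q ≤ p
    let K : ℕ → Set (ℝ × ℝ) := fun n => {p ∈ X | p.2 ≤ (n : ℝ) * (1 - p.1)}
    (∀ n, (K n).Nonempty ∧ IsCompact (K n)) ∧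
    Tendsto (fun n => Metric.hausdorffDist (K n) X) atTop (nhds 0) ∧
    (∀ n, ((1:ℝ), (0:ℝ)) ∈ K n ∧ ∀ y ∈ K n, R y (1, 0) → R (1, 0) y) ∧
    ¬ (∀ y ∈ X, R y ((1:ℝ), (0:ℝ)) → R ((1:ℝ), (0:ℝ)) y) := by
  intro X R K
  have hXmem : ∀ p : ℝ × ℝ, p ∈ X ↔ 0 ≤ p.1 ∧ p.1 ≤ 1 ∧ 0 ≤ p.2 ∧ p.2 ≤ 1 := by
    intro p
    simp [X, Set.mem_Icc, Prod.le_def]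
    tauto
  have h10 : ∀ n : ℕ, ((1:ℝ), (0:ℝ)) ∈ K n := by
    intro n
    refine ⟨(hXmem _).2 ⟨zero_le_one, le_refl _, le_refl _, zero_le_one⟩, ?_⟩
    simp
  refine ⟨?_, ?_, ?_, ?_⟩
  · intro n
    constructor
    · exact ⟨(1, 0), h10 n⟩
    · refine IsCompact.of_isClosed_subset isCompact_Icc ?_ (Set.sep_subset _ _)
      exact IsClosed.inter isClosed_Icc
        (isClosed_le continuous_snd
          (continuous_const.mul (continuous_const.sub continuous_fst)))
  · -- Hausdorff convergence
    have hle : ∀ n : ℕ, 1 ≤ n → Metric.hausdorffDist (K n) X ≤ 1 / (n : ℝ) := by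
      intro n hn
      have hnpos : (0:ℝ) < n := by exact_mod_cast hn
      apply Metric.hausdorffDist_le_of_mem_dist (by positivity)
      · intro x hx
        refine ⟨x, hx.1, by simp⟩
      · intro x hx
        obtain ⟨hx1, hx2, hx3, hx4⟩ := (hXmem x).1 hx
        refine ⟨(min x.1 (1 - 1/(n:ℝ)), x.2), ⟨?_, ?_⟩, ?_⟩
        · refine (hXmem _).2 ⟨le_min hx1 ?_, le_trans (min_le_left _ _) hx2, hx3, hx4⟩
          have : 1 / (n:ℝ) ≤ 1 := by
            rw [div_le_one hnpos]; exact_mod_cast hn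
          linarith
        · have hmin : min x.1 (1 - 1/(n:ℝ)) ≤ 1 - 1/(n:ℝ) := min_le_right _ _
          have : (1:ℝ) ≤ (n:ℝ) * (1 - min x.1 (1 - 1/(n:ℝ))) := by
            have h2 : 1/(n:ℝ) ≤ 1 - min x.1 (1 - 1/(n:ℝ)) := by linarith
            calc (1:ℝ) = (n:ℝ) * (1/(n:ℝ)) := by field_simp
            _ ≤ (n:ℝ) * (1 - min x.1 (1 - 1/(n:ℝ))) :=
              mul_le_mul_of_nonneg_left h2 (le_of_lt hnpos)
          linarith
        · rw [Prod.dist_eq]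
          simp only [dist_self]
          have h1 : dist x.1 (min x.1 (1 - 1/(n:ℝ))) ≤ 1/(n:ℝ) := by
            rw [Real.dist_eq, abs_le]
            constructor
            · have := min_le_left x.1 (1 - 1/(n:ℝ))
              have : (0:ℝ) ≤ 1/(n:ℝ) := by positivity
              nlinarith [min_le_left x.1 (1 - 1/(n:ℝ))]
            · rcases min_cases x.1 (1 - 1/(n:ℝ)) with ⟨h, _⟩ | ⟨h, _⟩
              · rw [h, sub_self]; positivity
              · rw [h]; linarith
          exact max_le h1 (by positivity)
    have h0 : ∀ n : ℕ, 0 ≤ Metric.hausdorffDist (K n) X := fun n =>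
      Metric.hausdorffDist_nonneg
    refine tendsto_of_tendsto_of_tendsto_of_le_of_le' tendsto_const_nhds
      tendsto_one_div_atTop_nhds_zero_nat ?_ ?_
    · exact Eventually.of_forall h0
    · filter_upwards [eventually_ge_atTop 1] with n hn using hle n hn
  · intro n
    refine ⟨h10 n, ?_⟩
    intro y hy hR
    obtain ⟨hyX, hyK⟩ := hy
    obtain ⟨hy1, hy2, hy3, hy4⟩ := (hXmem y).1 hyX
    obtain ⟨hR1, hR2⟩ := Prod.le_def.1 hR
    simp only at hR1 hR2
    have hy1' : y.1 = 1 := le_antisymm hy2 hR1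
    have : y.2 ≤ 0 := by rw [hy1'] at hyK; simpa using hyK
    exact Prod.le_def.2 ⟨by simp [hy1'], by simpa using this⟩
  · intro h
    have := h (1, 1) ((hXmem _).2 ⟨zero_le_one, le_refl _, zero_le_one, le_refl _⟩)
      (Prod.le_def.2 ⟨le_refl _, zero_le_one⟩)
    have := (Prod.le_def.1 this).2
    norm_num at this
end

section
/- Consider X = ℝ₊², the preference ≿ represented by the multi-utility {u₁, u₂} with u₁(a,b) = a + b and u₂(a,b) = a + 2b, and budget sets B_n = {(a,b) ∈ ℝ₊² : a + (1 + 1/n)b ≤ 1}. Then (1,0) is ≿-maximal in B_n for every n ∈ ℕ, the sets B_n converge in the Hausdorff metric to B = {(a,b) ∈ ℝ₊² : a + b ≤ 1}, but (1,0) is not ≿-maximal in B since (0,1) ∈ B and (0,1) ≻ (1,0). -/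
open Filter

/-- With the multi-utility u₁(a,b) = a + b, u₂(a,b) = a + 2b on ℝ₊² and
budget sets Bₙ = {(a,b) ∈ ℝ₊² : a + (1 + 1/n)b ≤ 1}, the bundle (1,0) is maximal in
every Bₙ, Bₙ → B = {(a,b) ∈ ℝ₊² : a + b ≤ 1} in the Hausdorff metric, but (1,0) is not
maximal in B since (0,1) ∈ B and (0,1) ≻ (1,0). -/
theorem stmt_14 :
    let u₁ : ℝ × ℝ → ℝ := fun p => p.1 + p.2
    let u₂ : ℝ × ℝ → ℝ := fun p => p.1 + 2 * p.2
    let R : ℝ × ℝ → ℝ × ℝ → Prop := fun p q => u₁ q ≤ u₁ p ∧ u₂ q ≤ u₂ p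
    let B : ℕ → Set (ℝ × ℝ) := fun n =>
      {p | 0 ≤ p.1 ∧ 0 ≤ p.2 ∧ p.1 + (1 + 1/((n:ℝ)+1)) * p.2 ≤ 1}
    let Bl : Set (ℝ × ℝ) := {p | 0 ≤ p.1 ∧ 0 ≤ p.2 ∧ p.1 + p.2 ≤ 1}
    (∀ n, ((1:ℝ), (0:ℝ)) ∈ B n ∧ ∀ y ∈ B n, R y (1, 0) → R (1, 0) y) ∧
    Tendsto (fun n => Metric.hausdorffDist (B n) Bl) atTop (nhds 0) ∧
    ((0:ℝ), (1:ℝ)) ∈ Bl ∧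
    (R (0, 1) (1, 0) ∧ ¬ R (1, 0) (0, 1)) ∧
    ¬ (∀ y ∈ Bl, R y ((1:ℝ), (0:ℝ)) → R ((1:ℝ), (0:ℝ)) y) := by
  intro u₁ u₂ R B Bl
  have hεpos : ∀ n : ℕ, (0:ℝ) < 1/((n:ℝ)+1) := by
    intro n
    positivity
  refine ⟨?_, ?_, ?_, ?_, ?_⟩
  · intro n
    constructor
    · refine ⟨by norm_num, by norm_num, by norm_num⟩
    · rintro ⟨a, b⟩ ⟨ha, hb, hab⟩ ⟨h1, h2⟩
      simp only [u₁, u₂, R] at h1 h2 ⊢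
      simp only at ha hb hab h1 h2
      have hb0 : b = 0 := by
        by_contra hbne
        have hbpos : 0 < b := lt_of_le_of_ne hb (Ne.symm hbne)
        nlinarith [mul_pos (hεpos n) hbpos]
      subst hb0
      constructor <;> nlinarith
  · -- Hausdorff convergence
    have key : ∀ n : ℕ, Metric.hausdorffDist (B n) Bl ≤ 1/((n:ℝ)+1) := by
      intro n
      set ε : ℝ := 1/((n:ℝ)+1) with hε
      have hε0 : 0 < ε := hεpos n
      apply Metric.hausdorffDist_le_of_mem_dist hε0.le
      · -- B n ⊆ Bl
        rintro ⟨a, b⟩ ⟨ha, hb, hab⟩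
        refine ⟨(a, b), ⟨ha, hb, by simp only at *; nlinarith⟩, by simp [hε0.le]⟩
      · -- each point of Bl is within ε of B n
        rintro ⟨a, b⟩ ⟨ha, hb, hab⟩
        simp only at ha hb hab
        set c : ℝ := 1/(1+ε) with hc
        have h1ε : (0:ℝ) < 1 + ε := by linarith
        have hc0 : 0 < c := by positivity
        have hc1 : c ≤ 1 := by
          rw [hc, div_le_one h1ε]; linarith
        have ha1 : a ≤ 1 := by linarith
        have hb1 : b ≤ 1 := by linarith
        have h1c : 1 - c ≤ ε := by
          have he : 1 - 1/(1+ε) = ε/(1+ε) := by field_simp; ring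
          rw [hc, he, div_le_iff₀ h1ε]
          nlinarith
        refine ⟨(c*a, c*b), ⟨by positivity, by positivity, ?_⟩, ?_⟩
        · show c*a + (1+ε)*(c*b) ≤ 1
          have he : (1+ε)*(c*b) = b := by
            rw [hc, ← mul_assoc, mul_one_div_cancel h1ε.ne', one_mul]
          rw [he]
          nlinarith [mul_le_of_le_one_left ha hc1]
        · rw [Prod.dist_eq]
          simp only [Real.dist_eq]
          have hca : c*a ≤ a := mul_le_of_le_one_left ha hc1
          have hcb : c*b ≤ b := mul_le_of_le_one_left hb hc1
          apply max_le
          · rw [abs_of_nonneg (by linarith)]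
            nlinarith [mul_nonneg (sub_nonneg.mpr hc1) (sub_nonneg.mpr ha1)]
          · rw [abs_of_nonneg (by linarith)]
            nlinarith [mul_nonneg (sub_nonneg.mpr hc1) (sub_nonneg.mpr hb1)]
    have hnn : ∀ n : ℕ, (0:ℝ) ≤ Metric.hausdorffDist (B n) Bl := fun n =>
      Metric.hausdorffDist_nonneg
    exact squeeze_zero hnn key tendsto_one_div_add_atTop_nhds_zero_nat
  · exact ⟨le_refl _, zero_le_one, by norm_num⟩
  · constructor
    · exact ⟨by norm_num [u₁], by norm_num [u₂]⟩
    · rintro ⟨-, h2⟩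
      norm_num [u₂] at h2
  · intro h
    have := h (0, 1) ⟨le_refl _, zero_le_one, by norm_num⟩ ⟨by norm_num [u₁], by norm_num [u₂]⟩
    norm_num [R, u₂] at this
end

section
/- Suppose there is a finite partition 𝒟* of a metric space X such that for every n the collection of maximal ≿_n-domains relative to X equals 𝒟*, and the closed graphs of ≿_n converge in the Hausdorff metric to the graph of ≿, with compact sets K_n → K. Then the collection of maximal ≿-domains relative to K is {D ∩ K : D ∈ 𝒟*, D ∩ K ≠ ∅}, and every Hausdorff limit of a sequence of maximal ≿_n-domains relative to K_n is a maximal ≿-domain relative to K. -/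
open Filter
open scoped ENNReal

lemma completeOn_mono {X : Type*} {R : X → X → Prop} {A B : Set X}
    (h : CompleteOn R B) (hAB : A ⊆ B) : CompleteOn R A :=
  fun x hx y hy => h x (hAB hx) y (hAB hy)

lemma exists_max_domain {X : Type*} (R : X → X → Prop) (A : Set X) (hA : CompleteOn R A) :
    ∃ M, A ⊆ M ∧ MaxDomainRel R Set.univ M := by
  obtain ⟨M, hAM, hM⟩ := zorn_subset_nonempty {B : Set X | CompleteOn R B}
    (fun c hc hchain _ => by
      refine ⟨⋃₀ c, ?_, fun s hs => Set.subset_sUnion_of_mem hs⟩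
      rintro x ⟨s, hs, hxs⟩ y ⟨t, ht, hyt⟩
      rcases hchain.total hs ht with hst | hts
      · exact hc ht x (hst hxs) y hyt
      · exact hc hs x hxs y (hts hyt)) A hA
  refine ⟨M, hAM, Set.subset_univ M, hM.prop, fun A' hMA' _ hA' => ?_⟩
  exact (hM.eq_of_subset hA' hMA').symm

lemma ennreal_eq_zero_of_forall_le {a : ℝ≥0∞} (h : ∀ ε : ℝ≥0∞, 0 < ε → a ≤ ε) : a = 0 := by
  refine nonpos_iff_eq_zero.mp (ENNReal.le_of_forall_pos_le_add fun ε hε _ => ?_)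
  simpa using h ε (by exact_mod_cast hε)

lemma complete_pair_of_approx {X : Type*} [MetricSpace X] {S : Set (X × X)} (hS : IsClosed S)
    {x y : X}
    (h : ∀ ε : ℝ≥0∞, 0 < ε →
      min (EMetric.infEdist (x, y) S) (EMetric.infEdist (y, x) S) ≤ ε) :
    (x, y) ∈ S ∨ (y, x) ∈ S := by
  have h0 := ennreal_eq_zero_of_forall_le h
  rcases min_le_iff.mp h0.le with h1 | h1
  · exact Or.inl ((EMetric.mem_iff_infEdist_zero_of_closed hS).2 (nonpos_iff_eq_zero.mp h1))
  · exact Or.inr ((EMetric.mem_iff_infEdist_zero_of_closed hS).2 (nonpos_iff_eq_zero.mp h1))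

lemma cross_incomp {X : Type*} {Q : X → X → Prop} (hrefl : Reflexive Q)
    {𝒟 : Set (Set X)} (hdisj : ∀ A ∈ 𝒟, ∀ B ∈ 𝒟, A ≠ B → Disjoint A B)
    (hQ : {A : Set X | MaxDomainRel Q Set.univ A} = 𝒟)
    {D B : Set X} (hD : D ∈ 𝒟) (hB : B ∈ 𝒟) (hDB : D ≠ B)
    {x y : X} (hx : x ∈ D) (hy : y ∈ B) : ¬ Q x y := by
  intro h
  have hpair : CompleteOn Q {x, y} := by
    rintro a (rfl | rfl) b (rfl | rfl)
    · exact Or.inl (hrefl _)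
    · exact Or.inl h
    · exact Or.inr h
    · exact Or.inl (hrefl _)
  obtain ⟨M, hsub, hM⟩ := exists_max_domain Q _ hpair
  have hMD : M ∈ 𝒟 := by rw [← hQ]; exact hM
  have h1 : M = D := by
    by_contra hne
    exact Set.disjoint_left.mp (hdisj M hMD D hD hne) (hsub (Or.inl rfl)) hx
  have h2 : M = B := by
    by_contra hne
    exact Set.disjoint_left.mp (hdisj M hMD B hB hne) (hsub (Or.inr rfl)) hy
  exact hDB (h1 ▸ h2)

section Generic

variable {X : Type*} {Q : X → X → Prop} {𝒟 : Set (Set X)}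

/-- If `x` is in block `D` and `y` is comparable to `x`, then `y ∈ D`. -/
lemma same_block (hcover : ⋃₀ 𝒟 = Set.univ)
    (hcross : ∀ D ∈ 𝒟, ∀ B ∈ 𝒟, D ≠ B → ∀ x ∈ D, ∀ y ∈ B, ¬ Q x y)
    {D : Set X} (hD : D ∈ 𝒟) {x y : X} (hx : x ∈ D) (h : Q x y ∨ Q y x) : y ∈ D := by
  have : y ∈ ⋃₀ 𝒟 := hcover.symm ▸ Set.mem_univ y
  obtain ⟨B, hB, hyB⟩ := this
  by_cases hDB : D = B
  · exact hDB ▸ hyB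
  rcases h with h | h
  · exact absurd h (hcross D hD B hB hDB x hx y hyB)
  · exact absurd h (hcross B hB D hD (Ne.symm hDB) y hyB x hx)

lemma trace_eq (hcover : ⋃₀ 𝒟 = Set.univ)
    (hcomp : ∀ D ∈ 𝒟, CompleteOn Q D)
    (hcross : ∀ D ∈ 𝒟, ∀ B ∈ 𝒟, D ≠ B → ∀ x ∈ D, ∀ y ∈ B, ¬ Q x y)
    {C A : Set X} (hA : MaxDomainRel Q C A) (hAne : A.Nonempty) :
    ∃ B ∈ 𝒟, A = B ∩ C := by
  obtain ⟨x₀, hx₀⟩ := hAne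
  have hx₀univ : x₀ ∈ ⋃₀ 𝒟 := hcover.symm ▸ Set.mem_univ x₀
  obtain ⟨B, hB, hx₀B⟩ := hx₀univ
  have hAB : A ⊆ B := fun y hy =>
    same_block hcover hcross hB hx₀B (hA.2.1 x₀ hx₀ y hy)
  have hABC : A ⊆ B ∩ C := fun y hy => ⟨hAB hy, hA.1 hy⟩
  refine ⟨B, hB, (hA.2.2 (B ∩ C) hABC Set.inter_subset_right
    (completeOn_mono (hcomp B hB) Set.inter_subset_left)).symm⟩

lemma trace_max (hcover : ⋃₀ 𝒟 = Set.univ)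
    (hcomp : ∀ D ∈ 𝒟, CompleteOn Q D)
    (hcross : ∀ D ∈ 𝒟, ∀ B ∈ 𝒟, D ≠ B → ∀ x ∈ D, ∀ y ∈ B, ¬ Q x y)
    {C B : Set X} (hB : B ∈ 𝒟) (hne : (B ∩ C).Nonempty) :
    MaxDomainRel Q C (B ∩ C) := by
  refine ⟨Set.inter_subset_right, completeOn_mono (hcomp B hB) Set.inter_subset_left,
    fun A' hsub hA'C hA' => ?_⟩
  obtain ⟨x₀, hx₀B, hx₀C⟩ := hne
  refine Set.Subset.antisymm (fun y hy => ⟨?_, hA'C hy⟩) hsub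
  exact same_block hcover hcross hB hx₀B (hA' x₀ (hsub ⟨hx₀B, hx₀C⟩) y hy)

end Generic

/-- If a finite partition 𝒟* of X equals the collection of maximal
≿ₙ-domains relative to X for every n, the graphs of ≿ₙ converge to the graph of ≿,
and compact Kₙ → K, then the maximal ≿-domains relative to K are exactly the nonempty
traces D ∩ K with D ∈ 𝒟*, and every Hausdorff limit of a sequence of maximal
≿ₙ-domains relative to Kₙ is a maximal ≿-domain relative to K. -/
theorem stmt_19 {X : Type*} [MetricSpace X]
    (Rn : ℕ → X → X → Prop) (R : X → X → Prop)
    (hrefln : ∀ n, Reflexive (Rn n)) (htransn : ∀ n, Transitive (Rn n))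
    (hrefl : Reflexive R) (htrans : Transitive R)
    (hclosedn : ∀ n, IsClosed {p : X × X | Rn n p.1 p.2})
    (hclosed : IsClosed {p : X × X | R p.1 p.2})
    (hRconv : Tendsto
      (fun n => EMetric.hausdorffEdist {p : X × X | Rn n p.1 p.2} {p : X × X | R p.1 p.2})
      atTop (nhds (0 : ℝ≥0∞)))
    (𝒟 : Set (Set X)) (hfin : 𝒟.Finite)
    (hne : ∀ A ∈ 𝒟, A.Nonempty) (hcover : ⋃₀ 𝒟 = Set.univ)
    (hdisj : ∀ A ∈ 𝒟, ∀ B ∈ 𝒟, A ≠ B → Disjoint A B)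
    (hDn : ∀ n, {A : Set X | MaxDomainRel (Rn n) Set.univ A} = 𝒟)
    (K : ℕ → Set X) (Kl : Set X)
    (hKn : ∀ n, (K n).Nonempty ∧ IsCompact (K n))
    (hKl : Kl.Nonempty) (hKlc : IsCompact Kl)
    (hKconv : Tendsto (fun n => Metric.hausdorffDist (K n) Kl) atTop (nhds 0)) :
    ({A : Set X | MaxDomainRel R Kl A} =
      {A : Set X | ∃ B ∈ 𝒟, (B ∩ Kl).Nonempty ∧ A = B ∩ Kl}) ∧
    (∀ (Ds : ℕ → Set X) (Dl : Set X), (∀ n, MaxDomainRel (Rn n) (K n) (Ds n)) →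
      Dl.Nonempty → IsCompact Dl →
      Tendsto (fun n => Metric.hausdorffDist (Ds n) Dl) atTop (nhds 0) →
      MaxDomainRel R Kl Dl) := by
  classical
  set G : ℕ → Set (X × X) := fun n => {p : X × X | Rn n p.1 p.2} with hG
  set GR : Set (X × X) := {p : X × X | R p.1 p.2} with hGR
  -- per-n block completeness
  have hcompn : ∀ n, ∀ D ∈ 𝒟, CompleteOn (Rn n) D := by
    intro n D hD
    rw [← hDn n] at hD
    exact hD.2.1
  -- per-n cross-block incomparability
  have hcrossn : ∀ n, ∀ D ∈ 𝒟, ∀ B ∈ 𝒟, D ≠ B → ∀ x ∈ D, ∀ y ∈ B, ¬ Rn n x y :=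
    fun n D hD B hB hDB x hx y hy =>
      cross_incomp (hrefln n) hdisj (hDn n) hD hB hDB hx hy
  -- blocks are closed
  have hDclosed : ∀ D ∈ 𝒟, IsClosed D := by
    intro D hD
    have hDmax : MaxDomainRel (Rn 0) Set.univ D := by rw [← hDn 0] at hD; exact hD
    have hcc : CompleteOn (Rn 0) (closure D) := by
      intro x hx y hy
      have := complete_pair_of_approx (S := G 0) (hclosedn 0) (x := x) (y := y) ?_
      · exact this
      intro ε hε
      obtain ⟨x', hx'D, hxx'⟩ := EMetric.mem_closure_iff.1 hx ε hε
      obtain ⟨y', hy'D, hyy'⟩ := EMetric.mem_closure_iff.1 hy ε hε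
      rcases hDmax.2.1 x' hx'D y' hy'D with h | h
      · refine le_trans (min_le_left _ _) ?_
        refine le_trans (EMetric.infEdist_le_edist_of_mem
          (show ((x', y') : X × X) ∈ G 0 from h)) ?_
        rw [Prod.edist_eq]
        exact max_le hxx'.le hyy'.le
      · refine le_trans (min_le_right _ _) ?_
        refine le_trans (EMetric.infEdist_le_edist_of_mem
          (show ((y', x') : X × X) ∈ G 0 from h)) ?_
        rw [Prod.edist_eq]
        exact max_le hyy'.le hxx'.le
    have : closure D = D := hDmax.2.2 (closure D) subset_closure (Set.subset_univ _) hcc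
    exact this ▸ isClosed_closure
  -- blocks are open
  have hDopen : ∀ D ∈ 𝒟, IsOpen D := by
    intro D hD
    have hcompl : Dᶜ = ⋃₀ (𝒟 \ {D}) := by
      ext x
      constructor
      · intro hx
        have : x ∈ ⋃₀ 𝒟 := hcover.symm ▸ Set.mem_univ x
        obtain ⟨B, hB, hxB⟩ := this
        exact ⟨B, ⟨hB, fun h => hx (h ▸ hxB)⟩, hxB⟩
      · rintro ⟨B, ⟨hB, hBD⟩, hxB⟩ hxD
        exact Set.disjoint_left.mp (hdisj B hB D hD hBD) hxB hxD
    have : IsClosed (⋃₀ (𝒟 \ {D})) := by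
      rw [Set.sUnion_eq_biUnion]
      exact (hfin.diff (t := {D})).isClosed_biUnion fun B hB => hDclosed B hB.1
    rw [← isClosed_compl_iff, hcompl]
    exact this
  -- graph convergence, reversed
  have hRG : Tendsto (fun n => EMetric.hausdorffEdist GR (G n)) atTop (nhds 0) := by
    simpa [EMetric.hausdorffEdist, Metric.hausdorffEDist_comm] using hRconv
  -- R cross-block incomparability
  have hRcross : ∀ D ∈ 𝒟, ∀ B ∈ 𝒟, D ≠ B → ∀ x ∈ D, ∀ y ∈ B, ¬ R x y := by
    intro D hD B hB hDB x hx y hy h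
    obtain ⟨εD, hεD, hballD⟩ := EMetric.isOpen_iff.1 (hDopen D hD) x hx
    obtain ⟨εB, hεB, hballB⟩ := EMetric.isOpen_iff.1 (hDopen B hB) y hy
    set ε := min εD εB with hε
    have hεpos : 0 < ε := lt_min hεD hεB
    obtain ⟨n, hn⟩ := (hRG.eventually (gt_mem_nhds hεpos)).exists
    have hxy : (x, y) ∈ GR := h
    have : EMetric.infEdist (x, y) (G n) < ε :=
      lt_of_le_of_lt (EMetric.infEdist_le_hausdorffEdist_of_mem hxy) hn
    obtain ⟨p, hpG, hp⟩ := EMetric.infEdist_lt_iff.1 this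
    rw [Prod.edist_eq, max_lt_iff] at hp
    have hx' : p.1 ∈ D := hballD (by
      rw [EMetric.mem_ball, edist_comm]; exact lt_of_lt_of_le hp.1 (min_le_left _ _))
    have hy' : p.2 ∈ B := hballB (by
      rw [EMetric.mem_ball, edist_comm]; exact lt_of_lt_of_le hp.2 (min_le_right _ _))
    exact hcrossn n D hD B hB hDB p.1 hx' p.2 hy' hpG
  -- R complete on blocks
  have hRcomp : ∀ D ∈ 𝒟, CompleteOn R D := by
    intro D hD x hx y hy
    refine complete_pair_of_approx (S := GR) hclosed fun ε hε => ?_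
    obtain ⟨n, hn⟩ := (hRconv.eventually (gt_mem_nhds hε)).exists
    rcases hcompn n D hD x hx y hy with h | h
    · refine le_trans (min_le_left _ _) ?_
      calc EMetric.infEdist (x, y) GR
          ≤ EMetric.infEdist (x, y) (G n) + EMetric.hausdorffEdist (G n) GR :=
            EMetric.infEdist_le_infEdist_add_hausdorffEdist
        _ ≤ 0 + EMetric.hausdorffEdist (G n) GR := by
            rw [show EMetric.infEdist (x, y) (G n) = 0 from EMetric.infEdist_zero_of_mem (show ((x, y) : X × X) ∈ G n from h)]
        _ ≤ ε := by simpa using hn.le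
    · refine le_trans (min_le_right _ _) ?_
      calc EMetric.infEdist (y, x) GR
          ≤ EMetric.infEdist (y, x) (G n) + EMetric.hausdorffEdist (G n) GR :=
            EMetric.infEdist_le_infEdist_add_hausdorffEdist
        _ ≤ 0 + EMetric.hausdorffEdist (G n) GR := by
            rw [show EMetric.infEdist (y, x) (G n) = 0 from EMetric.infEdist_zero_of_mem (show ((y, x) : X × X) ∈ G n from h)]
        _ ≤ ε := by simpa using hn.le
  -- nonemptiness of maximal domains relative to nonempty sets
  have hmax_ne : ∀ (Q : X → X → Prop), Reflexive Q → ∀ {C A : Set X},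
      MaxDomainRel Q C A → C.Nonempty → A.Nonempty := by
    intro Q hQrefl C A hA hC
    by_contra hA'
    rw [Set.not_nonempty_iff_eq_empty] at hA'
    obtain ⟨k, hk⟩ := hC
    have : ({k} : Set X) = A := hA.2.2 {k} (by simp [hA'])
      (Set.singleton_subset_iff.2 hk)
      (by rintro a rfl b rfl; exact Or.inl (hQrefl _))
    simp [hA'] at this
  -- Part 1
  have part1 : {A : Set X | MaxDomainRel R Kl A} =
      {A : Set X | ∃ B ∈ 𝒟, (B ∩ Kl).Nonempty ∧ A = B ∩ Kl} := by
    ext A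
    constructor
    · intro hA
      have hAne : A.Nonempty := hmax_ne R hrefl hA hKl
      obtain ⟨B, hB, hABKl⟩ := trace_eq hcover hRcomp hRcross hA hAne
      exact ⟨B, hB, hABKl ▸ hAne, hABKl⟩
    · rintro ⟨B, hB, hBne, rfl⟩
      exact trace_max hcover hRcomp hRcross hB hBne
  refine ⟨part1, ?_⟩
  -- Part 2
  intro Ds Dl hDs hDlne hDlc hDconv
  have hDsne : ∀ n, (Ds n).Nonempty := fun n => hmax_ne (Rn n) (hrefln n) (hDs n) (hKn n).1
  -- blocks of Ds n
  have hBn : ∀ n, ∃ B ∈ 𝒟, Ds n = B ∩ K n := fun n =>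
    trace_eq hcover (hcompn n) (hcrossn n) (hDs n) (hDsne n)
  choose Bn hBnD hBnEq using hBn
  -- Hausdorff edist convergences
  have edist_conv : ∀ (S : ℕ → Set X) (T : Set X), (∀ n, (S n).Nonempty) →
      (∀ n, Bornology.IsBounded (S n)) → T.Nonempty → Bornology.IsBounded T →
      Tendsto (fun n => Metric.hausdorffDist (S n) T) atTop (nhds 0) →
      Tendsto (fun n => EMetric.hausdorffEdist (S n) T) atTop (nhds 0) := by
    intro S T hSne hSb hTne hTb hconv
    have hfin' : ∀ n, EMetric.hausdorffEdist (S n) T ≠ ⊤ := fun n =>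
      Metric.hausdorffEdist_ne_top_of_nonempty_of_bounded (hSne n) hTne (hSb n) hTb
    have h := ENNReal.tendsto_ofReal hconv
    rw [ENNReal.ofReal_zero] at h
    refine h.congr fun n => ?_
    rw [Metric.hausdorffDist]; exact ENNReal.ofReal_toReal (hfin' n)
  have hKE : Tendsto (fun n => EMetric.hausdorffEdist (K n) Kl) atTop (nhds 0) :=
    edist_conv K Kl (fun n => (hKn n).1) (fun n => (hKn n).2.isBounded) hKl
      hKlc.isBounded hKconv
  have hDE : Tendsto (fun n => EMetric.hausdorffEdist (Ds n) Dl) atTop (nhds 0) :=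
    edist_conv Ds Dl hDsne (fun n => ((hKn n).2.isBounded).subset (hDs n).1) hDlne
      hDlc.isBounded hDconv
  have hKE' : Tendsto (fun n => EMetric.hausdorffEdist Kl (K n)) atTop (nhds 0) := by
    simpa [EMetric.hausdorffEdist, Metric.hausdorffEDist_comm] using hKE
  have hDE' : Tendsto (fun n => EMetric.hausdorffEdist Dl (Ds n)) atTop (nhds 0) := by
    simpa [EMetric.hausdorffEdist, Metric.hausdorffEDist_comm] using hDE
  -- Dl ⊆ Kl
  have hDlKl : Dl ⊆ Kl := by
    intro x hx
    have hbound : ∀ n, EMetric.infEdist x Kl ≤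
        EMetric.hausdorffEdist Dl (Ds n) + EMetric.hausdorffEdist (K n) Kl := by
      intro n
      calc EMetric.infEdist x Kl
          ≤ EMetric.infEdist x (K n) + EMetric.hausdorffEdist (K n) Kl :=
            EMetric.infEdist_le_infEdist_add_hausdorffEdist
        _ ≤ EMetric.infEdist x (Ds n) + EMetric.hausdorffEdist (K n) Kl := by
            gcongr
            exact EMetric.infEdist_anti ((hBnEq n) ▸ Set.inter_subset_right)
        _ ≤ EMetric.hausdorffEdist Dl (Ds n) + EMetric.hausdorffEdist (K n) Kl := by
            gcongr
            exact EMetric.infEdist_le_hausdorffEdist_of_mem hx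
    have hlim : Tendsto (fun n => EMetric.hausdorffEdist Dl (Ds n) +
        EMetric.hausdorffEdist (K n) Kl) atTop (nhds 0) := by
      simpa using hDE'.add hKE
    have : EMetric.infEdist x Kl ≤ 0 := ge_of_tendsto' hlim hbound
    exact (EMetric.mem_iff_infEdist_zero_of_closed hKlc.isClosed).2 (nonpos_iff_eq_zero.mp this)
  -- Dl complete
  have hDlcomp : CompleteOn R Dl := by
    intro x hx y hy
    refine complete_pair_of_approx (S := GR) hclosed fun ε hε => ?_
    have hε2 : (0 : ℝ≥0∞) < ε / 2 := ENNReal.half_pos hε.ne'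
    obtain ⟨n, hn1, hn2⟩ :=
      ((hDE'.eventually (gt_mem_nhds hε2)).and (hRconv.eventually (gt_mem_nhds hε2))).exists
    obtain ⟨x', hx'D, hxx'⟩ := EMetric.infEdist_lt_iff.1
      (lt_of_le_of_lt (EMetric.infEdist_le_hausdorffEdist_of_mem hx) hn1)
    obtain ⟨y', hy'D, hyy'⟩ := EMetric.infEdist_lt_iff.1
      (lt_of_le_of_lt (EMetric.infEdist_le_hausdorffEdist_of_mem hy) hn1)
    rcases (hDs n).2.1 x' hx'D y' hy'D with h | h
    · refine le_trans (min_le_left _ _) ?_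
      calc EMetric.infEdist (x, y) GR
          ≤ EMetric.infEdist (x, y) (G n) + EMetric.hausdorffEdist (G n) GR :=
            EMetric.infEdist_le_infEdist_add_hausdorffEdist
        _ ≤ edist (x, y) ((x', y') : X × X) + EMetric.hausdorffEdist (G n) GR := by
            gcongr
            exact EMetric.infEdist_le_edist_of_mem (show ((x', y') : X × X) ∈ G n from h)
        _ ≤ ε / 2 + ε / 2 :=
            add_le_add (by rw [Prod.edist_eq]; exact max_le hxx'.le hyy'.le) hn2.le
        _ = ε := ENNReal.add_halves ε
    · refine le_trans (min_le_right _ _) ?_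
      calc EMetric.infEdist (y, x) GR
          ≤ EMetric.infEdist (y, x) (G n) + EMetric.hausdorffEdist (G n) GR :=
            EMetric.infEdist_le_infEdist_add_hausdorffEdist
        _ ≤ edist (y, x) ((y', x') : X × X) + EMetric.hausdorffEdist (G n) GR := by
            gcongr
            exact EMetric.infEdist_le_edist_of_mem (show ((y', x') : X × X) ∈ G n from h)
        _ ≤ ε / 2 + ε / 2 :=
            add_le_add (by rw [Prod.edist_eq]; exact max_le hyy'.le hxx'.le) hn2.le
        _ = ε := ENNReal.add_halves ε
  -- the block of Dl
  obtain ⟨x₀, hx₀⟩ := hDlne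
  obtain ⟨B, hB, hx₀B⟩ : ∃ B ∈ 𝒟, x₀ ∈ B := by
    have : x₀ ∈ ⋃₀ 𝒟 := hcover.symm ▸ Set.mem_univ x₀
    obtain ⟨B, hB, h⟩ := this
    exact ⟨B, hB, h⟩
  have hDlB : Dl ⊆ B := fun y hy =>
    same_block hcover hRcross hB hx₀B (hDlcomp x₀ hx₀ y hy)
  -- eventually Bn n = B
  obtain ⟨ε₀, hε₀, hball₀⟩ := EMetric.isOpen_iff.1 (hDopen B hB) x₀ hx₀B
  have hevB : ∀ᶠ n in atTop, Bn n = B := by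
    filter_upwards [hDE'.eventually (gt_mem_nhds hε₀)] with n hn
    obtain ⟨x', hx'D, hxx'⟩ := EMetric.infEdist_lt_iff.1
      (lt_of_le_of_lt (EMetric.infEdist_le_hausdorffEdist_of_mem hx₀) hn)
    have hx'B : x' ∈ B := hball₀ (by rw [EMetric.mem_ball, edist_comm]; exact hxx')
    have hx'Bn : x' ∈ Bn n := ((hBnEq n) ▸ hx'D).1
    by_contra hne'
    exact Set.disjoint_left.mp (hdisj (Bn n) (hBnD n) B hB hne') hx'Bn hx'B
  -- B ∩ Kl ⊆ Dl
  have hBKlDl : B ∩ Kl ⊆ Dl := by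
    rintro z ⟨hzB, hzKl⟩
    have : EMetric.infEdist z Dl = 0 := by
      refine ennreal_eq_zero_of_forall_le fun ε hε => ?_
      have hε2 : (0 : ℝ≥0∞) < ε / 2 := ENNReal.half_pos hε.ne'
      obtain ⟨εB, hεB, hballB⟩ := EMetric.isOpen_iff.1 (hDopen B hB) z hzB
      set δ := min εB (ε / 2) with hδ
      have hδpos : 0 < δ := lt_min hεB hε2
      obtain ⟨n, hn1, hn2, hn3⟩ := ((hKE'.eventually (gt_mem_nhds hδpos)).and
        ((hevB).and (hDE.eventually (gt_mem_nhds hε2)))).exists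
      obtain ⟨z', hz'K, hzz'⟩ := EMetric.infEdist_lt_iff.1
        (lt_of_le_of_lt (EMetric.infEdist_le_hausdorffEdist_of_mem hzKl) hn1)
      have hz'B : z' ∈ B := hballB (by
        rw [EMetric.mem_ball, edist_comm]
        exact lt_of_lt_of_le hzz' (min_le_left _ _))
      have hz'Ds : z' ∈ Ds n := by
        rw [hBnEq n, hn2]
        exact ⟨hz'B, hz'K⟩
      calc EMetric.infEdist z Dl
          ≤ EMetric.infEdist z (Ds n) + EMetric.hausdorffEdist (Ds n) Dl :=
            EMetric.infEdist_le_infEdist_add_hausdorffEdist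
        _ ≤ edist z z' + EMetric.hausdorffEdist (Ds n) Dl := by
            gcongr
            exact EMetric.infEdist_le_edist_of_mem hz'Ds
        _ ≤ ε / 2 + ε / 2 :=
            add_le_add (le_trans hzz'.le (min_le_right _ _)) hn3.le
        _ = ε := ENNReal.add_halves ε
    exact (EMetric.mem_iff_infEdist_zero_of_closed hDlc.isClosed).2 this
  have hDlEq : Dl = B ∩ Kl :=
    Set.Subset.antisymm (fun y hy => ⟨hDlB hy, hDlKl hy⟩) hBKlDl
  rw [hDlEq]
  exact trace_max hcover hRcomp hRcross hB ⟨x₀, hDlEq ▸ hx₀⟩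
end
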